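/- In the hardness-reduction game, within any single phase of n rounds, the maximum total payoff any defender strategy can achieve is 1; in particular any two rewards of +1 in the same phase must be separated by a penalty of −1. -/

import Mathlib

/-- States of the hardness-reduction game: the last `m` outcomes `Õ` together
with the flag `Ô` recording whether a reward was just received. -/
abbrev GState (m : ℕ) := (Fin m → Bool) × Bool

abbrev DefAct := Fin 3

abbrev AdvAct := Bool × Fin 4

/-- Transition of the hardness-reduction game. -/
def step {m : ℕ} (σ : GState m) (d : DefAct) (a : AdvAct) : GState m :=
  (fun j => if h : j.val = 0 then a.1 else σ.1 ⟨j.val - 1, by have := j.isLt; omega⟩,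
   decide (d = 2 ∨ d.val = a.2.val))

/-- Payoff of the hardness-reduction game: `−1` for playing `d ≠ 2` while
`Ô = 1` (unless the adversary plays the reset action `3`), `+1` for matching
the adversary's second component with `d ≠ 2` while `Ô = 0`, else `0`. -/
def pay {m : ℕ} (σ : GState m) (d : DefAct) (a : AdvAct) : ℝ :=
  if σ.2 = true ∧ d ≠ 2 ∧ a.2 ≠ 3 then -1
  else if d ≠ 2 ∧ d.val = a.2.val ∧ σ.2 = false then 1
  else 0

/-- State trajectory when the defender plays the action sequence `d`. -/
def statesSeq {m : ℕ} (d : ℕ → DefAct) (adv : ℕ → AdvAct) (σ0 : GState m) :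
    ℕ → GState m
  | 0 => σ0
  | t + 1 => step (statesSeq d adv σ0 t) (d t) (adv t)

/-- within a single phase of `n = 2^m` rounds — the adversary
plays the reset action `3` at the first round of the phase and never again
during the phase — the total payoff of **any** defender action sequence is at
most `1` (any two `+1` rewards in a phase are separated by a `−1` penalty). -/
theorem phase_payoff_le_one (m : ℕ) (d : ℕ → DefAct) (a : ℕ → AdvAct)
    (σ0 : GState m)
    (hreset : (a 0).2 = 3)
    (hnoreset : ∀ t, 1 ≤ t → t < 2 ^ m → (a t).2 ≠ 3) :
    ∑ t ∈ Finset.range (2 ^ m), pay (statesSeq d a σ0 t) (d t) (a t) ≤ 1 := by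
  have key : ∀ t, 1 ≤ t → t ≤ 2 ^ m →
      ∑ t' ∈ Finset.range t, pay (statesSeq d a σ0 t') (d t') (a t')
        ≤ (if (statesSeq d a σ0 t).2 = true then (1:ℝ) else 0) := by
    intro t
    induction t with
    | zero => intro h; omega
    | succ t ih =>
      intro _ ht
      rcases Nat.eq_zero_or_pos t with rfl | hpos
      · have h3 : ((3 : Fin 4) : ℕ) = 3 := rfl
        have h0 : pay (statesSeq d a σ0 0) (d 0) (a 0) = 0 := by
          have hd : (d 0).val ≠ 3 := by
            have := (d 0).isLt; omega
          simp [pay, hreset, hd, h3]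
        simp only [Finset.sum_range_succ, Finset.sum_range_zero, h0, zero_add]
        split <;> norm_num
      · have ha : (a t).2 ≠ 3 := hnoreset t hpos (by omega)
        have hS := ih hpos (by omega)
        rw [Finset.sum_range_succ]
        have hflag : (statesSeq d a σ0 (t+1)).2
            = decide (d t = 2 ∨ (d t).val = (a t).2.val) := by
          simp [statesSeq, step]
        by_cases hf : (statesSeq d a σ0 t).2 = true
        · simp only [hf, if_pos rfl, if_true] at hS
          by_cases hd2 : d t = 2
          · have hp : pay (statesSeq d a σ0 t) (d t) (a t) = 0 := by
              simp [pay, hd2, hf]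
            rw [hp, hflag]
            simp [hd2]
            linarith
          · have hp : pay (statesSeq d a σ0 t) (d t) (a t) = -1 := by
              simp [pay, hd2, hf, ha]
            rw [hp]
            split <;> linarith
        · rw [if_neg hf] at hS
          have hf' : (statesSeq d a σ0 t).2 = false := by
            simpa using hf
          by_cases hd2 : d t = 2
          · have hp : pay (statesSeq d a σ0 t) (d t) (a t) = 0 := by
              simp [pay, hd2, hf']
            rw [hp]
            split <;> linarith
          · by_cases hm : (d t).val = (a t).2.val
            · have hp : pay (statesSeq d a σ0 t) (d t) (a t) = 1 := by
                simp [pay, hd2, hm, hf']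
              rw [hp, hflag]
              simp [hm]
              linarith
            · have hp : pay (statesSeq d a σ0 t) (d t) (a t) = 0 := by
                simp [pay, hd2, hm, hf']
              rw [hp]
              split <;> linarith
  have h := key (2 ^ m) Nat.one_le_two_pow le_rfl
  split at h <;> linarith
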